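/- Let $G$ be a $d$-uniform hypergraph whose number of vertices $n$ satisfies $2k \le n \le Rk$ for some $k \ge 2d$, and suppose $G$ has a matching of size $m$. Let $U$ be a uniformly random $k$-vertex subset of the vertex set of $G$. Then, except with probability at most $C_{d,R}/m$, the induced subgraph $G[U]$ has a matching of size at least $c_{d,R} \cdot m$, where $c_{d,R} > 0$ and $C_{d,R}$ are constants depending only on $d$ and $R$. -/

import Mathlib

open Finset
open scoped Classical

lemma count_superset {V : Type} [Fintype V] [DecidableEq V] (k : ℕ) (t : Finset V)
    (ht : t.card ≤ k) :
    (((univ : Finset V).powersetCard k).filter (fun U => t ⊆ U)).card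
      = (Fintype.card V - t.card).choose (k - t.card) := by
  have h1 : ((univ : Finset V) \ t).card = Fintype.card V - t.card := by
    rw [Finset.card_sdiff_of_subset (subset_univ t), Finset.card_univ]
  rw [← h1, ← Finset.card_powersetCard]
  refine Finset.card_bij' (fun U _ => U \ t) (fun W _ => W ∪ t) ?_ ?_ ?_ ?_
  · intro U hU
    simp only [mem_filter, mem_powersetCard] at hU
    obtain ⟨⟨_, hcard⟩, hsub⟩ := hU
    rw [mem_powersetCard]
    exact ⟨sdiff_subset_sdiff (subset_univ U) (le_refl t),
      by rw [card_sdiff_of_subset hsub, hcard]⟩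
  · intro W hW
    rw [mem_powersetCard] at hW
    obtain ⟨hWsub, hWcard⟩ := hW
    have hdisj : Disjoint W t := by
      refine disjoint_left.mpr fun x hxW hxt => ?_
      have := hWsub hxW
      simp only [mem_sdiff] at this
      exact this.2 hxt
    simp only [mem_filter, mem_powersetCard]
    refine ⟨⟨subset_univ _, ?_⟩, subset_union_right⟩
    rw [card_union_of_disjoint hdisj, hWcard]
    omega
  · intro U hU
    simp only [mem_filter, mem_powersetCard] at hU
    exact sdiff_union_of_subset hU.2
  · intro W hW
    rw [mem_powersetCard] at hW
    have hdisj : Disjoint W t := by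
      refine disjoint_left.mpr fun x hxW hxt => ?_
      have := hW.1 hxW
      simp only [mem_sdiff] at this
      exact this.2 hxt
    rw [Finset.union_sdiff_cancel_right hdisj]

lemma dF_pos {n k : ℕ} (h : k ≤ n) : 0 < n.descFactorial k := by
  rcases Nat.eq_zero_or_pos (n.descFactorial k) with h0 | h0
  · rw [Nat.descFactorial_eq_zero_iff_lt] at h0; omega
  · exact h0

lemma choose_desc : ∀ (d n k : ℕ), d ≤ k → k ≤ n →
    Nat.choose n k * Nat.descFactorial k d
      = Nat.choose (n - d) (k - d) * Nat.descFactorial n d := by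
  intro d
  induction d with
  | zero => simp
  | succ d ih =>
    intro n k hd hk
    have hdk : d ≤ k := by omega
    have h1 : (n - d - 1) + 1 = n - d := by omega
    have h2 : (k - d - 1) + 1 = k - d := by omega
    have hs := Nat.add_one_mul_choose_eq (n - d - 1) (k - d - 1)
    rw [h1, h2] at hs
    have e3 : n - (d+1) = n - d - 1 := by omega
    have e4 : k - (d+1) = k - d - 1 := by omega
    rw [Nat.descFactorial_succ, Nat.descFactorial_succ, e3, e4]
    calc n.choose k * ((k - d) * k.descFactorial d)
        = (k - d) * (n.choose k * k.descFactorial d) := by ring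
      _ = (k - d) * ((n - d).choose (k - d) * n.descFactorial d) := by rw [ih n k hdk hk]
      _ = ((n - d).choose (k - d) * (k - d)) * n.descFactorial d := by ring
      _ = ((n - d) * (n - d - 1).choose (k - d - 1)) * n.descFactorial d := by rw [hs]
      _ = (n - d - 1).choose (k - d - 1) * ((n - d) * n.descFactorial d) := by ring

lemma key_ineq (n k d : ℕ) (h2d : 2 * d ≤ k) (hk : k ≤ n) :
    n.choose k * (n - 2*d).choose (k - 2*d) ≤ ((n - d).choose (k - d))^2 := by
  have eq1 := choose_desc d n k (by omega) hk
  have eq2 := choose_desc d (n - d) (k - d) (by omega) (by omega)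
  rw [show n - d - d = n - 2*d by omega, show k - d - d = k - 2*d by omega] at eq2
  have prodineq : n.descFactorial d * (k - d).descFactorial d
      ≤ k.descFactorial d * (n - d).descFactorial d := by
    simp only [Nat.descFactorial_eq_prod_range]
    rw [← Finset.prod_mul_distrib, ← Finset.prod_mul_distrib]
    apply Finset.prod_le_prod'
    intro i hi
    simp only [Finset.mem_range] at hi
    rcases le_or_gt (k - d) i with h | h
    · rw [Nat.sub_eq_zero_of_le h, Nat.mul_zero]; exact Nat.zero_le _
    · have h1 : d + i < k := by omega
      have hkn : (k:ℤ) ≤ n := by exact_mod_cast hk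
      zify [show i ≤ n by omega, show i ≤ k by omega, show i ≤ n - d by omega,
        show i ≤ k - d by omega, show d ≤ n by omega, show d ≤ k by omega]
      nlinarith [Int.ofNat_nonneg d, Int.ofNat_nonneg i]
  have hP : 0 < k.descFactorial d * (n - d).descFactorial d :=
    Nat.mul_pos (dF_pos (by omega)) (dF_pos (by omega))
  apply Nat.le_of_mul_le_mul_right _ hP
  calc n.choose k * (n - 2*d).choose (k - 2*d) * (k.descFactorial d * (n - d).descFactorial d)
      = (n.choose k * k.descFactorial d) * ((n - 2*d).choose (k - 2*d) * (n - d).descFactorial d) := by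
        ring
    _ = ((n - d).choose (k - d) * n.descFactorial d)
          * ((n - d).choose (k - d) * (k - d).descFactorial d) := by rw [eq1, ← eq2]
    _ = ((n - d).choose (k - d))^2 * (n.descFactorial d * (k - d).descFactorial d) := by ring
    _ ≤ ((n - d).choose (k - d))^2 * (k.descFactorial d * (n - d).descFactorial d) :=
        Nat.mul_le_mul_left _ prodineq

lemma choose_upper (n k d R : ℕ) (h2d : 2 * d ≤ k) (hk : k ≤ n) (hR : n ≤ R * k) :
    n.choose k ≤ (n - d).choose (k - d) * (2*R + 2)^d := by
  have eq1 := choose_desc d n k (by omega) hk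
  have hdf : n.descFactorial d ≤ (2*R + 2)^d * k.descFactorial d := by
    simp only [Nat.descFactorial_eq_prod_range]
    have : (2*R + 2)^d * ∏ i ∈ range d, (k - i) = ∏ i ∈ range d, ((2*R + 2) * (k - i)) := by
      rw [Finset.prod_mul_distrib, Finset.prod_const, Finset.card_range]
    rw [this]
    apply Finset.prod_le_prod'
    intro i hi
    simp only [Finset.mem_range] at hi
    have h1 : k ≤ 2 * (k - i) := by omega
    calc n - i ≤ n := Nat.sub_le _ _
      _ ≤ R * k := hR
      _ ≤ (R + 1) * k := Nat.mul_le_mul_right _ (by omega)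
      _ ≤ (R + 1) * (2 * (k - i)) := Nat.mul_le_mul_left _ h1
      _ = (2*R + 2) * (k - i) := by ring
  have hP : 0 < k.descFactorial d := dF_pos (by omega)
  apply Nat.le_of_mul_le_mul_right _ hP
  calc n.choose k * k.descFactorial d = (n - d).choose (k - d) * n.descFactorial d := eq1
    _ ≤ (n - d).choose (k - d) * ((2*R + 2)^d * k.descFactorial d) :=
        Nat.mul_le_mul_left _ hdf
    _ = (n - d).choose (k - d) * (2*R + 2)^d * k.descFactorial d := by ring

set_option maxHeartbeats 1000000 in
theorem stmt_8 (d R : ℕ) (hd : 0 < d) :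
    ∃ (C c : ℝ), 0 < c ∧
      ∀ (n k m : ℕ) (V : Type) [Fintype V] [DecidableEq V],
        Fintype.card V = n → 2 * k ≤ n → n ≤ R * k → 2 * d ≤ k →
        ∀ E : Finset (Finset V), (∀ e ∈ E, e.card = d) →
        (∃ M ⊆ E, M.card = m ∧ ∀ a ∈ M, ∀ b ∈ M, a ≠ b → Disjoint a b) →
        ((((Finset.univ : Finset V).powersetCard k).filter (fun U =>
            ¬ ∃ M ⊆ E.filter (fun e => e ⊆ U), c * m ≤ (M.card : ℝ) ∧
              ∀ a ∈ M, ∀ b ∈ M, a ≠ b → Disjoint a b)).card : ℝ) /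
          ((((Finset.univ : Finset V).powersetCard k).card : ℝ)) ≤ C / m := by
  have hXpos : (0:ℝ) < (2*(R:ℝ)+2)^d := by positivity
  refine ⟨4*((2*(R:ℝ)+2)^d)^2, 1/(2*(2*(R:ℝ)+2)^d), by positivity, ?_⟩
  intro n k m V _ _ hn h2k hRk hk E hE hM
  obtain ⟨M, hME, hMcard, hMdisj⟩ := hM
  set X : ℝ := (2*(R:ℝ)+2)^d with hXdef
  clear_value X
  set c : ℝ := 1/(2*X) with hcdef
  set Cc : ℝ := 4*X^2 with hCcdef
  clear_value c Cc
  have hcpos : 0 < c := by rw [hcdef]; positivity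
  have hkn : k ≤ n := by omega
  have hdk : d ≤ k := by omega
  set Ω := (univ : Finset V).powersetCard k with hΩ
  set T := n.choose k with hTdef
  have hT : Ω.card = T := by rw [hΩ, card_powersetCard, card_univ, hn]
  have hTpos : 0 < T := Nat.choose_pos hkn
  set A := (n - d).choose (k - d) with hAdef
  set B2 := (n - 2*d).choose (k - 2*d) with hB2def
  rcases Nat.eq_zero_or_pos m with hm | hm
  · have hBad : Ω.filter (fun U =>
        ¬ ∃ M ⊆ E.filter (fun e => e ⊆ U), c * m ≤ (M.card : ℝ) ∧
          ∀ a ∈ M, ∀ b ∈ M, a ≠ b → Disjoint a b) = ∅ := by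
      rw [Finset.filter_eq_empty_iff]
      intro U _
      exact fun hcon => hcon ⟨∅, empty_subset _, by simp [hm], by simp⟩
    rw [hBad]
    simp [hm]
  -- main case
  have hmR : (1:ℝ) ≤ (m:ℝ) := by exact_mod_cast hm
  have hMne : M.Nonempty := card_pos.mp (by omega)
  have hcnt : ∀ t : Finset V, t.card ≤ k →
      (Ω.filter (fun U => t ⊆ U)).card = (n - t.card).choose (k - t.card) := by
    intro t ht
    rw [hΩ, count_superset k t ht, hn]
  have hAe : ∀ e ∈ M, (Ω.filter (fun U => e ⊆ U)).card = A := by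
    intro e he
    have hce : e.card = d := hE e (hME he)
    rw [hcnt e (by rw [hce]; omega), hce]
  have hBe : ∀ e ∈ M, ∀ f ∈ M, e ≠ f →
      (Ω.filter (fun U => e ⊆ U ∧ f ⊆ U)).card = B2 := by
    intro e he f hf hef
    have hce : e.card = d := hE e (hME he)
    have hcf : f.card = d := hE f (hME hf)
    have hdisj := hMdisj e he f hf hef
    have hfun : Ω.filter (fun U => e ⊆ U ∧ f ⊆ U) = Ω.filter (fun U => e ∪ f ⊆ U) := by
      apply Finset.filter_congr
      intro U _
      exact (Finset.union_subset_iff).symm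
    rw [hfun, hcnt (e ∪ f) (by rw [card_union_of_disjoint hdisj, hce, hcf]; omega),
      card_union_of_disjoint hdisj, hce, hcf, show d + d = 2*d by ring]
  have S1 : ∑ U ∈ Ω, (M.filter (fun e => e ⊆ U)).card = m * A := by
    calc ∑ U ∈ Ω, (M.filter (fun e => e ⊆ U)).card
        = ∑ U ∈ Ω, ∑ e ∈ M, if e ⊆ U then 1 else 0 :=
          Finset.sum_congr rfl fun U _ => Finset.card_filter _ _
      _ = ∑ e ∈ M, ∑ U ∈ Ω, if e ⊆ U then 1 else 0 := Finset.sum_comm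
      _ = ∑ e ∈ M, (Ω.filter (fun U => e ⊆ U)).card :=
          Finset.sum_congr rfl fun e _ => (Finset.card_filter _ _).symm
      _ = ∑ e ∈ M, A := Finset.sum_congr rfl hAe
      _ = m * A := by rw [Finset.sum_const, hMcard, smul_eq_mul]
  have S2 : ∑ U ∈ Ω, ((M.filter (fun e => e ⊆ U)).card)^2 = m * A + m * (m-1) * B2 := by
    have expand : ∀ U : Finset V, ((M.filter (fun e => e ⊆ U)).card)^2
        = ∑ e ∈ M, ∑ f ∈ M, if e ⊆ U ∧ f ⊆ U then 1 else 0 := by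
      intro U
      rw [Finset.card_filter, sq, Finset.sum_mul_sum]
      refine Finset.sum_congr rfl fun e _ => Finset.sum_congr rfl fun f _ => ?_
      by_cases h1 : e ⊆ U <;> by_cases h2 : f ⊆ U <;> simp [h1, h2]
    calc ∑ U ∈ Ω, ((M.filter (fun e => e ⊆ U)).card)^2
        = ∑ U ∈ Ω, ∑ e ∈ M, ∑ f ∈ M, if e ⊆ U ∧ f ⊆ U then 1 else 0 :=
          Finset.sum_congr rfl fun U _ => expand U
      _ = ∑ e ∈ M, ∑ U ∈ Ω, ∑ f ∈ M, if e ⊆ U ∧ f ⊆ U then 1 else 0 := Finset.sum_comm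
      _ = ∑ e ∈ M, ∑ f ∈ M, ∑ U ∈ Ω, if e ⊆ U ∧ f ⊆ U then 1 else 0 :=
          Finset.sum_congr rfl fun e _ => Finset.sum_comm
      _ = ∑ e ∈ M, ∑ f ∈ M, (Ω.filter (fun U => e ⊆ U ∧ f ⊆ U)).card :=
          Finset.sum_congr rfl fun e _ => Finset.sum_congr rfl fun f _ =>
            (Finset.card_filter _ _).symm
      _ = ∑ e ∈ M, (A + (m-1) * B2) := by
          refine Finset.sum_congr rfl fun e he => ?_
          rw [← Finset.sum_erase_add M _ he]
          have h1 : (Ω.filter (fun U => e ⊆ U ∧ e ⊆ U)).card = A := by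
            simp only [and_self]
            exact hAe e he
          have h2 : ∑ f ∈ M.erase e, (Ω.filter (fun U => e ⊆ U ∧ f ⊆ U)).card
              = (m-1) * B2 := by
            rw [Finset.sum_congr rfl (fun f hf => hBe e he f (Finset.mem_of_mem_erase hf)
              (Ne.symm (Finset.ne_of_mem_erase hf))), Finset.sum_const,
              Finset.card_erase_of_mem he, hMcard, smul_eq_mul]
          rw [h1, h2]
          ring
      _ = m * (A + (m-1) * B2) := by rw [Finset.sum_const, hMcard, smul_eq_mul]
      _ = m * A + m * (m-1) * B2 := by ring
  -- real versions
  have htR : (0:ℝ) < (T:ℝ) := by exact_mod_cast hTpos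
  have haR : (0:ℝ) ≤ (A:ℝ) := Nat.cast_nonneg _
  have hbR : (0:ℝ) ≤ (B2:ℝ) := Nat.cast_nonneg _
  have hsum1 : ∑ U ∈ Ω, ((M.filter (fun e => e ⊆ U)).card : ℝ) = (m:ℝ) * A := by
    have := congrArg (Nat.cast : ℕ → ℝ) S1
    push_cast at this
    exact this
  have hsum2 : ∑ U ∈ Ω, (((M.filter (fun e => e ⊆ U)).card : ℝ))^2
      = (m:ℝ) * A + (m:ℝ) * ((m:ℝ)-1) * B2 := by
    have := congrArg (Nat.cast : ℕ → ℝ) S2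
    push_cast [Nat.cast_sub (by omega : 1 ≤ m)] at this
    exact this
  have key1 : (T:ℝ) * B2 ≤ (A:ℝ)^2 := by exact_mod_cast key_ineq n k d hk hkn
  have key2 : (T:ℝ) ≤ (A:ℝ) * X := by
    rw [hXdef]
    have := choose_upper n k d R hk hkn hRk
    calc (T:ℝ) ≤ ((A * (2*R + 2)^d : ℕ) : ℝ) := by exact_mod_cast this
      _ = (A:ℝ) * (2*(R:ℝ)+2)^d := by push_cast; ring
  set μ : ℝ := (m:ℝ) * A / T with hμdef
  clear_value μ
  have hμ2c : 2 * c * m ≤ μ := by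
    have hcm : 2 * c * (m:ℝ) = (m:ℝ) / X := by rw [hcdef]; field_simp
    rw [hcm, hμdef, div_le_div_iff₀ hXpos htR]
    calc (m:ℝ) * T ≤ (m:ℝ) * ((A:ℝ) * X) :=
          mul_le_mul_of_nonneg_left key2 (by positivity)
      _ = (m:ℝ) * A * X := by ring
  have sumsq : ∑ U ∈ Ω, ((((M.filter (fun e => e ⊆ U)).card : ℝ)) - μ)^2 ≤ (m:ℝ) * A := by
    have expand : ∀ x : ℝ, (x - μ)^2 = x^2 - 2*μ*x + μ^2 := fun x => by ring
    simp_rw [expand]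
    rw [Finset.sum_add_distrib, Finset.sum_sub_distrib, Finset.sum_const, ← Finset.mul_sum,
      hsum1, hsum2, hT, nsmul_eq_mul]
    have hq : (T:ℝ) * μ^2 = ((m:ℝ)*A)^2 / T := by
      rw [hμdef]; field_simp
    have hq2 : 2*μ*((m:ℝ)*A) = 2*(((m:ℝ)*A)^2 / T) := by
      rw [hμdef]; field_simp
    rw [hq, hq2]
    have final : (m:ℝ)*((m:ℝ)-1)*B2 ≤ ((m:ℝ)*A)^2 / T := by
      rw [le_div_iff₀ htR]
      have h1 : (m:ℝ)^2 * ((T:ℝ)*B2) ≤ (m:ℝ)^2 * (A:ℝ)^2 :=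
        mul_le_mul_of_nonneg_left key1 (sq_nonneg _)
      have h2 : (m:ℝ)*((m:ℝ)-1) ≤ (m:ℝ)^2 := by nlinarith
      have h3 : (m:ℝ)*((m:ℝ)-1)*((B2:ℝ)*T) ≤ (m:ℝ)^2*((B2:ℝ)*T) :=
        mul_le_mul_of_nonneg_right h2 (mul_nonneg hbR htR.le)
      calc (m:ℝ)*((m:ℝ)-1)*(B2:ℝ)*(T:ℝ) = (m:ℝ)*((m:ℝ)-1)*((B2:ℝ)*T) := by ring
        _ ≤ (m:ℝ)^2*((B2:ℝ)*T) := h3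
        _ = (m:ℝ)^2*((T:ℝ)*B2) := by ring
        _ ≤ (m:ℝ)^2*(A:ℝ)^2 := h1
        _ = ((m:ℝ)*A)^2 := by ring
    linarith [final]
  -- bad set bound
  have hbadlt : ∀ U ∈ Ω.filter (fun U =>
      ¬ ∃ M ⊆ E.filter (fun e => e ⊆ U), c * m ≤ (M.card : ℝ) ∧
        ∀ a ∈ M, ∀ b ∈ M, a ≠ b → Disjoint a b),
      ((M.filter (fun e => e ⊆ U)).card : ℝ) < c * m := by
    intro U hU
    rw [mem_filter] at hU
    by_contra hcon
    push_neg at hcon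
    exact hU.2 ⟨M.filter (fun e => e ⊆ U), Finset.filter_subset_filter _ hME, hcon,
      fun a ha b hb hab => hMdisj a (Finset.mem_filter.mp ha).1 b (Finset.mem_filter.mp hb).1 hab⟩
  set Bad := Ω.filter (fun U =>
      ¬ ∃ M ⊆ E.filter (fun e => e ⊆ U), c * m ≤ (M.card : ℝ) ∧
        ∀ a ∈ M, ∀ b ∈ M, a ≠ b → Disjoint a b) with hBaddef
  have hAT : (A:ℝ) ≤ (T:ℝ) := by
    obtain ⟨e0, he0⟩ := hMne
    have : A ≤ T := by
      calc A = (Ω.filter (fun U => e0 ⊆ U)).card := (hAe e0 he0).symm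
        _ ≤ Ω.card := Finset.card_le_card (Finset.filter_subset _ _)
        _ = T := hT
    exact_mod_cast this
  have cheb : (Bad.card : ℝ) * (c*(m:ℝ))^2 ≤ (m:ℝ) * T := by
    calc (Bad.card : ℝ) * (c*(m:ℝ))^2 = ∑ _U ∈ Bad, (c*(m:ℝ))^2 := by
          rw [Finset.sum_const, nsmul_eq_mul]
      _ ≤ ∑ U ∈ Bad, ((((M.filter (fun e => e ⊆ U)).card : ℝ)) - μ)^2 := by
          refine Finset.sum_le_sum fun U hU => ?_
          have h1 := hbadlt U hU
          have hcm : (0:ℝ) ≤ c * (m:ℝ) := by positivity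
          nlinarith [h1, hμ2c, hcm]
      _ ≤ ∑ U ∈ Ω, ((((M.filter (fun e => e ⊆ U)).card : ℝ)) - μ)^2 :=
          Finset.sum_le_sum_of_subset_of_nonneg (Finset.filter_subset _ _)
            (fun U _ _ => sq_nonneg _)
      _ ≤ (m:ℝ) * A := sumsq
      _ ≤ (m:ℝ) * T := mul_le_mul_of_nonneg_left hAT (by positivity)
  rw [hT]
  have hmpos : (0:ℝ) < (m:ℝ) := by exact_mod_cast hm
  rw [div_le_div_iff₀ htR hmpos]
  have hCc2 : Cc * c^2 = 1 := by
    rw [hCcdef, hcdef]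
    field_simp
    ring
  have hpos2 : (0:ℝ) < c^2 * (m:ℝ) := by positivity
  refine le_of_mul_le_mul_right ?_ hpos2
  calc (Bad.card:ℝ) * (m:ℝ) * (c^2 * (m:ℝ)) = (Bad.card:ℝ) * (c*(m:ℝ))^2 := by ring
    _ ≤ (m:ℝ) * T := cheb
    _ = Cc * (T:ℝ) * (c^2 * (m:ℝ)) := by
        rw [show Cc * (T:ℝ) * (c^2 * (m:ℝ)) = (Cc * c^2) * ((T:ℝ) * (m:ℝ)) from by ring, hCc2]
        ring
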